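/- arXiv:1711.02869 — 6 statements merged into one kernel-verified Lean document; each statement's English description precedes it below -/
import Mathlib

section
/- Let D ≥ 1 and let L be a D×D real lower triangular matrix. Let V denote the vector space of D×D real lower triangular matrices, and define the linear endomorphism T_L of V by T_L(X) = tril(X Lᵀ + L Xᵀ), where tril(A) is the matrix whose (i,j) entry equals A i j when i ≥ j and 0 when i < j. Then the determinant of T_L equals 2^D · ∏_{i=1}^{D} (L i i)^{D+1-i}. -/
open Matrix

/-- The subspace of `D × D` real lower triangular matrices. -/
def lowerTriangularSubmodule (D : ℕ) : Submodule ℝ (Matrix (Fin D) (Fin D) ℝ) where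
  carrier := {X | ∀ i j : Fin D, i < j → X i j = 0}
  add_mem' := by
    intro X Y hX hY i j hij
    simp [Matrix.add_apply, hX i j hij, hY i j hij]
  zero_mem' := by intro i j _; rfl
  smul_mem' := by
    intro c X hX i j hij
    simp [Matrix.smul_apply, hX i j hij]

/-- `tril` : keep the lower triangular part of a matrix, as a linear map. -/
def trilLinearMap (D : ℕ) :
    Matrix (Fin D) (Fin D) ℝ →ₗ[ℝ] Matrix (Fin D) (Fin D) ℝ where
  toFun A := Matrix.of fun i j => if j ≤ i then A i j else 0
  map_add' A B := by
    ext i j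
    simp only [Matrix.of_apply, Matrix.add_apply]
    split <;> simp
  map_smul' c A := by
    ext i j
    simp only [Matrix.of_apply, Matrix.smul_apply, RingHom.id_apply]
    split <;> simp

/-- The endomorphism `X ↦ tril (X Lᵀ + L Xᵀ)` of the space of lower triangular
matrices: the Fréchet derivative of the Cholesky parametrization `L ↦ L Lᵀ`. -/
noncomputable def choleskyJacobianMap (D : ℕ) (L : Matrix (Fin D) (Fin D) ℝ) :
    lowerTriangularSubmodule D →ₗ[ℝ] lowerTriangularSubmodule D :=
  LinearMap.codRestrict (lowerTriangularSubmodule D)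
    ((trilLinearMap D).comp
      ((LinearMap.mulRight ℝ Lᵀ
          + (LinearMap.mulLeft ℝ L).comp
              (Matrix.transposeLinearEquiv (Fin D) (Fin D) ℝ ℝ).toLinearMap).comp
        (lowerTriangularSubmodule D).subtype))
    (by
      intro X i j hij
      simp only [LinearMap.comp_apply, trilLinearMap, LinearMap.coe_mk, AddHom.coe_mk,
        Matrix.of_apply]
      exact if_neg (not_le.mpr hij))

namespace CholAux

/-- Index set of the lower-triangular entries. -/
abbrev Idx (D : ℕ) := {p : Fin D × Fin D // p.2 ≤ p.1}

/-- Coordinates on lower triangular matrices. -/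
noncomputable def ltEquivFun (D : ℕ) :
    lowerTriangularSubmodule D ≃ₗ[ℝ] (Idx D → ℝ) where
  toFun X p := X.1 p.1.1 p.1.2
  invFun f := ⟨Matrix.of fun i j => if h : j ≤ i then f ⟨(i, j), h⟩ else 0, by
    intro i j hij
    exact dif_neg (not_le.mpr hij)⟩
  map_add' X Y := rfl
  map_smul' c X := rfl
  left_inv X := by
    apply Subtype.ext
    ext i j
    by_cases h : j ≤ i
    · simp [h]
    · simp [h, X.2 i j (not_le.1 h)]
  right_inv f := by
    funext p
    obtain ⟨⟨i, j⟩, h⟩ := p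
    simp [h]

noncomputable def ltBasis (D : ℕ) : Module.Basis (Idx D) ℝ (lowerTriangularSubmodule D) :=
  Module.Basis.ofEquivFun (ltEquivFun D)

lemma ltBasis_val (D : ℕ) (q : Idx D) (a b : Fin D) :
    ((ltBasis D q : lowerTriangularSubmodule D) : Matrix (Fin D) (Fin D) ℝ) a b
      = if a = q.1.1 ∧ b = q.1.2 then 1 else 0 := by
  rw [ltBasis, Module.Basis.coe_ofEquivFun]
  show ((ltEquivFun D).symm (Function.update 0 q 1) : Matrix (Fin D) (Fin D) ℝ) a b = _
  show (if h : b ≤ a then (Function.update 0 q 1 : Idx D → ℝ) ⟨(a, b), h⟩ else 0) = _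
  by_cases h : b ≤ a
  · rw [dif_pos h, Function.update_apply]
    simp only [Pi.zero_apply]
    congr 1
    simp only [eq_iff_iff, Subtype.ext_iff, Prod.ext_iff]
  · rw [dif_neg h, eq_comm]
    rw [if_neg]
    rintro ⟨ha, hb⟩
    exact h (ha ▸ hb ▸ q.2)

lemma cholesky_apply_val (D : ℕ) (L : Matrix (Fin D) (Fin D) ℝ)
    (X : lowerTriangularSubmodule D) (i j : Fin D) (h : j ≤ i) :
    ((choleskyJacobianMap D L X : lowerTriangularSubmodule D) : Matrix (Fin D) (Fin D) ℝ) i j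
      = ((X : Matrix (Fin D) (Fin D) ℝ) * Lᵀ) i j
        + (L * (X : Matrix (Fin D) (Fin D) ℝ)ᵀ) i j := by
  show (trilLinearMap D ((LinearMap.mulRight ℝ Lᵀ + (LinearMap.mulLeft ℝ L).comp (Matrix.transposeLinearEquiv (Fin D) (Fin D) ℝ ℝ).toLinearMap) (X : Matrix (Fin D) (Fin D) ℝ))) i j = _
  simp only [LinearMap.comp_apply, trilLinearMap, LinearMap.coe_mk, AddHom.coe_mk,
    Matrix.of_apply, LinearMap.add_apply, LinearMap.mulRight_apply, LinearMap.mulLeft_apply,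
    Submodule.coe_subtype, LinearEquiv.coe_coe, Matrix.transposeLinearEquiv_apply,
    Matrix.add_apply]
  rw [if_pos h]
  rfl

/-- The key matrix-entry formula. -/
lemma toMatrix_entry (D : ℕ) (L : Matrix (Fin D) (Fin D) ℝ) (p q : Idx D) :
    LinearMap.toMatrix (ltBasis D) (ltBasis D) (choleskyJacobianMap D L) p q
      = (if p.1.1 = q.1.1 then L p.1.2 q.1.2 else 0)
        + (if p.1.2 = q.1.1 then L p.1.1 q.1.2 else 0) := by
  rw [LinearMap.toMatrix_apply, ltBasis, Module.Basis.ofEquivFun_repr_apply]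
  show ((choleskyJacobianMap D L ((Module.Basis.ofEquivFun (ltEquivFun D)) q)
      : lowerTriangularSubmodule D) : Matrix (Fin D) (Fin D) ℝ) p.1.1 p.1.2 = _
  rw [cholesky_apply_val D L _ _ _ p.2]
  have hB := ltBasis_val D q
  rw [ltBasis] at hB
  congr 1
  · rw [Matrix.mul_apply]
    have key : ∀ k : Fin D,
        ((Module.Basis.ofEquivFun (ltEquivFun D)) q : Matrix (Fin D) (Fin D) ℝ) p.1.1 k * Lᵀ k p.1.2
          = if k = q.1.2 then (if p.1.1 = q.1.1 then L p.1.2 q.1.2 else 0) else 0 := by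
      intro k
      rw [hB, Matrix.transpose_apply]
      by_cases h1 : p.1.1 = q.1.1 <;> by_cases h2 : k = q.1.2 <;> simp [h1, h2]
    rw [Finset.sum_congr rfl fun k _ => key k, Finset.sum_ite_eq' Finset.univ q.1.2]
    simp
  · rw [Matrix.mul_apply]
    have key : ∀ k : Fin D,
        L p.1.1 k * (((Module.Basis.ofEquivFun (ltEquivFun D)) q : Matrix (Fin D) (Fin D) ℝ))ᵀ k p.1.2
          = if k = q.1.2 then (if p.1.2 = q.1.1 then L p.1.1 q.1.2 else 0) else 0 := by
      intro k
      rw [Matrix.transpose_apply, hB]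
      by_cases h1 : p.1.2 = q.1.1 <;> by_cases h2 : k = q.1.2 <;> simp [h1, h2]
    rw [Finset.sum_congr rfl fun k _ => key k, Finset.sum_ite_eq' Finset.univ q.1.2]
    simp

/-- The linearly ordered index type: a subtype of the lexicographic product. -/
abbrev LIdx (D : ℕ) := {x : Lex (Fin D × Fin D) // (ofLex x).1 ≤ (ofLex x).2}

def lexEquiv (D : ℕ) : Idx D ≃ LIdx D where
  toFun p := ⟨toLex (p.1.2, p.1.1), p.2⟩
  invFun x := ⟨((ofLex x.1).2, (ofLex x.1).1), x.2⟩
  left_inv p := rfl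
  right_inv x := rfl

def sigmaEquiv (D : ℕ) : (Σ j : Fin D, {i : Fin D // j ≤ i}) ≃ Idx D where
  toFun s := ⟨(s.2.1, s.1), s.2.2⟩
  invFun p := ⟨p.1.2, p.1.1, p.2⟩
  left_inv s := rfl
  right_inv p := rfl

end CholAux

open CholAux

/-- The determinant of `X ↦ tril (X Lᵀ + L Xᵀ)` on lower triangular matrices equals
`2^D ∏_{i=1}^D (L i i)^{D+1-i}` (Jacobian of `L ↦ L Lᵀ`, Lemma A.1). -/
theorem det_choleskyJacobianMap (D : ℕ) (hD : 1 ≤ D) (L : Matrix (Fin D) (Fin D) ℝ)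
    (hL : ∀ i j : Fin D, i < j → L i j = 0) :
    LinearMap.det (choleskyJacobianMap D L)
      = 2 ^ D * ∏ i : Fin D, L i i ^ (D - (i : ℕ)) := by
  classical
  set M := LinearMap.toMatrix (ltBasis D) (ltBasis D) (choleskyJacobianMap D L) with hM
  rw [← LinearMap.det_toMatrix (ltBasis D), ← hM]
  set e := lexEquiv D with he
  set N : Matrix (LIdx D) (LIdx D) ℝ := Matrix.reindex e e M with hN
  have hdet : M.det = N.det := (Matrix.det_reindex_self e M).symm
  have hNval : ∀ x y : LIdx D, N x y = M (e.symm x) (e.symm y) := fun x y => rfl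
  -- matrix entries
  have hMval : ∀ p q : Idx D, M p q
      = (if p.1.1 = q.1.1 then L p.1.2 q.1.2 else 0)
        + (if p.1.2 = q.1.1 then L p.1.1 q.1.2 else 0) := fun p q => toMatrix_entry D L p q
  -- lower triangularity of N
  have htri : N.BlockTriangular (⇑OrderDual.toDual) := by
    rintro ⟨xv, hx⟩ ⟨yv, hy⟩ hxy
    have hxy' : xv < yv := hxy
    have h := (Prod.Lex.lt_iff (x := xv) (y := yv)).mp hxy'
    rw [hNval, hMval]
    show (if (ofLex xv).2 = (ofLex yv).2 then L (ofLex xv).1 (ofLex yv).1 else 0)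
       + (if (ofLex xv).1 = (ofLex yv).2 then L (ofLex xv).2 (ofLex yv).1 else 0) = 0
    set b := (ofLex xv).1 with hbdef
    set a := (ofLex xv).2 with hadef
    set d := (ofLex yv).1 with hddef
    set c := (ofLex yv).2 with hcdef
    have h1 : (if a = c then L b d else 0) = 0 := by
      by_cases hac : a = c
      · rw [if_pos hac]
        rcases h with h' | ⟨h', h''⟩
        · exact hL _ _ h'
        · exact absurd (hac ▸ h'') (lt_irrefl _)
      · exact if_neg hac
    have h2 : (if b = c then L a d else 0) = 0 := by
      by_cases hbc : b = c
      · exfalso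
        rcases h with h' | ⟨h', h''⟩
        · exact absurd (lt_of_lt_of_le h' (hy.trans hbc.ge)) (lt_irrefl _)
        · exact absurd (lt_of_lt_of_le h'' (le_trans hbc.ge hx)) (lt_irrefl _)
      · exact if_neg hbc
    rw [h1, h2, add_zero]
  rw [hdet, Matrix.det_of_lowerTriangular N htri]
  -- diagonal entries
  have hdiag : ∀ p : Idx D, M p p
      = L p.1.2 p.1.2 + (if p.1.2 = p.1.1 then L p.1.2 p.1.2 else 0) := by
    intro p
    rw [hMval p p, if_pos rfl]
    by_cases h : p.1.2 = p.1.1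
    · rw [if_pos h, if_pos h, h]
    · rw [if_neg h, if_neg h]
  have hNdiag : ∏ x : LIdx D, N x x = ∏ p : Idx D, M p p := by
    rw [← Equiv.prod_comp e (fun x => N x x)]
    exact Finset.prod_congr rfl fun p _ => by rw [hNval, Equiv.symm_apply_apply]
  rw [hNdiag]
  calc ∏ p : Idx D, M p p
      = ∏ s : (Σ j : Fin D, {i : Fin D // j ≤ i}), M (sigmaEquiv D s) (sigmaEquiv D s) :=
        (Fintype.prod_equiv (sigmaEquiv D) _ _ fun _ => rfl).symm
    _ = ∏ j : Fin D, ∏ i : {i : Fin D // j ≤ i},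
          (L j j + if (j : Fin D) = (i : Fin D) then L j j else 0) := by
        rw [← Finset.univ_sigma_univ, Finset.prod_sigma]
        exact Finset.prod_congr rfl fun j _ => Finset.prod_congr rfl fun i _ => by
          rw [hdiag]; rfl
    _ = ∏ j : Fin D, ∏ i ∈ Finset.Ici j, (L j j + if j = i then L j j else 0) := by
        refine Finset.prod_congr rfl fun j _ => ?_
        exact (Finset.prod_subtype (Finset.Ici j) (fun i => Finset.mem_Ici)
          (fun i => L j j + if j = i then L j j else 0)).symm
    _ = ∏ j : Fin D, 2 * L j j ^ (D - (j : ℕ)) := by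
        refine Finset.prod_congr rfl fun j _ => ?_
        rw [Finset.Ici_eq_cons_Ioi, Finset.prod_cons]
        have h1 : ∀ i ∈ Finset.Ioi j, (L j j + if j = i then L j j else 0) = L j j := by
          intro i hi
          rw [if_neg (ne_of_lt (Finset.mem_Ioi.1 hi)), add_zero]
        rw [Finset.prod_congr rfl h1, Finset.prod_const, Fin.card_Ioi, if_pos rfl]
        have h2 : D - (j : ℕ) = (D - 1 - (j : ℕ)) + 1 := by
          have := j.isLt; omega
        rw [h2, pow_succ]
        ring
    _ = 2 ^ D * ∏ i : Fin D, L i i ^ (D - (i : ℕ)) := by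
        rw [Finset.prod_mul_distrib, Finset.prod_const, Finset.card_univ, Fintype.card_fin]
end

section
/- Fix D ≥ 2, c₀ > 0 and B > 0. There exists a constant C > 0, depending only on D, c₀ and B, such that for all D×D real lower triangular matrices L₀, L₁ with |L_i j j| ≥ c₀ for all j and |(L_i) j k| ≤ B for all j, k (i = 0, 1), setting Σ_i = L_i L_iᵀ and letting p_i(y) = (2π)^{-D/2} (det Σ_i)^{-1/2} exp(−½ yᵀ Σ_i⁻¹ y) be the centered Gaussian densities, one has ½ ∫_{ℝ^D} (√(p₀(y)) − √(p₁(y)))² dy ≤ C · max_{j,k} |(L₀) j k − (L₁) j k|. -/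
open Matrix MeasureTheory
open Finset

/-- The multivariate normal density on `ℝ^D` with mean `μ` and covariance `S`. -/
noncomputable def gaussianDensity (D : ℕ) (μ : Fin D → ℝ)
    (S : Matrix (Fin D) (Fin D) ℝ) (y : Fin D → ℝ) : ℝ :=
  (2 * Real.pi) ^ (-(D : ℝ) / 2) * S.det ^ (-(1 : ℝ) / 2) *
    Real.exp (-(1 / 2) * ((y - μ) ⬝ᵥ (S⁻¹ *ᵥ (y - μ))))

lemma sq_sqrt_sub_sqrt_le {a b : ℝ} (ha : 0 ≤ a) (hb : 0 ≤ b) :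
    (Real.sqrt a - Real.sqrt b) ^ 2 ≤ |a - b| := by
  rcases le_total a b with h | h
  · have hs := Real.sqrt_le_sqrt h
    have := Real.sq_sqrt ha; have := Real.sq_sqrt hb
    have := Real.sqrt_nonneg a; have := Real.sqrt_nonneg b
    rw [abs_of_nonpos (by linarith)]
    nlinarith
  · have hs := Real.sqrt_le_sqrt h
    have := Real.sq_sqrt ha; have := Real.sq_sqrt hb
    have := Real.sqrt_nonneg a; have := Real.sqrt_nonneg b
    rw [abs_of_nonneg (by linarith)]
    nlinarith

lemma abs_exp_sub_exp_le {a b c : ℝ} (ha : a ≤ c) (hb : b ≤ c) :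
    |Real.exp a - Real.exp b| ≤ Real.exp c * |a - b| := by
  wlog h : b ≤ a generalizing a b
  · rw [abs_sub_comm, abs_sub_comm a b]; exact this hb ha (le_of_not_ge h)
  have key : Real.exp a - Real.exp b ≤ Real.exp c * (a - b) := by
    have h1 : Real.exp (b - a) ≥ 1 - (a - b) := by
      have := Real.add_one_le_exp (b - a); linarith
    have h2 : Real.exp b ≥ Real.exp a * (1 - (a - b)) := by
      have : Real.exp b = Real.exp a * Real.exp (b - a) := by
        rw [← Real.exp_add]; ring_nf
      rw [this]
      exact mul_le_mul_of_nonneg_left h1 (Real.exp_nonneg a)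
    have h3 : Real.exp a - Real.exp b ≤ Real.exp a * (a - b) := by nlinarith
    have h4 : Real.exp a ≤ Real.exp c := Real.exp_le_exp.2 ha
    nlinarith [Real.exp_nonneg a]
  rw [abs_of_nonneg (by linarith [Real.exp_le_exp.2 h] : (0:ℝ) ≤ Real.exp a - Real.exp b),
    abs_of_nonneg (by linarith : (0:ℝ) ≤ a - b)]
  exact key

lemma abs_prod_sub_prod_le {ι : Type*} (s : Finset ι) (a b : ι → ℝ) (R : ℝ) (hR : 1 ≤ R)
    (ha : ∀ i ∈ s, |a i| ≤ R) (hb : ∀ i ∈ s, |b i| ≤ R) :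
    |∏ i ∈ s, a i - ∏ i ∈ s, b i| ≤ R ^ s.card * ∑ i ∈ s, |a i - b i| := by
  classical
  induction s using Finset.induction_on with
  | empty => simp
  | @insert i s his ih =>
    have hRpos : (0:ℝ) < R := lt_of_lt_of_le one_pos hR
    have hprodb : |∏ j ∈ s, b j| ≤ R ^ s.card := by
      rw [abs_prod]
      calc ∏ j ∈ s, |b j| ≤ ∏ j ∈ s, R :=
            Finset.prod_le_prod (fun j _ => abs_nonneg _)
              (fun j hj => hb j (Finset.mem_insert_of_mem hj))
        _ = R ^ s.card := by rw [Finset.prod_const]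
    have ih' := ih (fun j hj => ha j (Finset.mem_insert_of_mem hj))
      (fun j hj => hb j (Finset.mem_insert_of_mem hj))
    rw [Finset.prod_insert his, Finset.prod_insert his, Finset.sum_insert his,
      Finset.card_insert_of_notMem his]
    have key : a i * ∏ j ∈ s, a j - b i * ∏ j ∈ s, b j
        = a i * (∏ j ∈ s, a j - ∏ j ∈ s, b j) + (a i - b i) * ∏ j ∈ s, b j := by ring
    rw [key]
    have hs1 : R ^ s.card ≤ R ^ (s.card + 1) := by
      apply pow_le_pow_right₀ hR (by omega)
    have e1 : |a i * (∏ j ∈ s, a j - ∏ j ∈ s, b j) + (a i - b i) * ∏ j ∈ s, b j|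
        ≤ |a i| * |∏ j ∈ s, a j - ∏ j ∈ s, b j| + |a i - b i| * |∏ j ∈ s, b j| := by
      refine (abs_add_le _ _).trans ?_; rw [abs_mul, abs_mul]
    have e2 : |a i| * |∏ j ∈ s, a j - ∏ j ∈ s, b j| ≤ R * (R ^ s.card * ∑ j ∈ s, |a j - b j|) :=
      mul_le_mul (ha i (Finset.mem_insert_self i s)) ih' (abs_nonneg _) hRpos.le
    have e3 : |a i - b i| * |∏ j ∈ s, b j| ≤ |a i - b i| * R ^ (s.card + 1) := by
      refine mul_le_mul_of_nonneg_left (hprodb.trans hs1) (abs_nonneg _)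
    have e4 : R * (R ^ s.card * ∑ j ∈ s, |a j - b j|) = R ^ (s.card + 1) * ∑ j ∈ s, |a j - b j| := by
      rw [pow_succ]; ring
    calc |a i * (∏ j ∈ s, a j - ∏ j ∈ s, b j) + (a i - b i) * ∏ j ∈ s, b j|
        ≤ R * (R ^ s.card * ∑ j ∈ s, |a j - b j|) + |a i - b i| * R ^ (s.card + 1) := by
          linarith
      _ = R ^ (s.card + 1) * (|a i - b i| + ∑ j ∈ s, |a j - b j|) := by rw [e4]; ring

lemma det_lowerTri {n : ℕ} (L : Matrix (Fin n) (Fin n) ℝ)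
    (h : ∀ i j : Fin n, i < j → L i j = 0) : L.det = ∏ i, L i i := by
  rw [← Matrix.det_transpose]
  have ht : Lᵀ.BlockTriangular id := fun i j hij => h j i hij
  rw [Matrix.det_of_upperTriangular ht]
  simp [Matrix.transpose_apply]

lemma cov_entry_bound {D : ℕ} {B : ℝ} (hB : 0 ≤ B) (L : Matrix (Fin D) (Fin D) ℝ)
    (hbnd : ∀ j k, |L j k| ≤ B) : ∀ i j, |(L * Lᵀ) i j| ≤ D * B ^ 2 := by
  intro i j
  rw [Matrix.mul_apply]
  refine (Finset.abs_sum_le_sum_abs _ _).trans ?_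
  calc (∑ m, |L i m * Lᵀ m j|) ≤ ∑ _m : Fin D, B ^ 2 := by
        refine Finset.sum_le_sum fun m _ => ?_
        rw [abs_mul, Matrix.transpose_apply, sq]
        exact mul_le_mul (hbnd i m) (hbnd j m) (abs_nonneg _) hB
    _ = D * B ^ 2 := by simp [mul_comm]

lemma det_cov {D : ℕ} (L : Matrix (Fin D) (Fin D) ℝ)
    (htri : ∀ i j : Fin D, i < j → L i j = 0) :
    (L * Lᵀ).det = (∏ j, |L j j|) ^ 2 := by
  rw [Matrix.det_mul, Matrix.det_transpose, det_lowerTri L htri, ← sq, ← abs_prod, sq_abs]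

lemma det_cov_pos {D : ℕ} {c₀ : ℝ} (hc₀ : 0 < c₀) (L : Matrix (Fin D) (Fin D) ℝ)
    (htri : ∀ i j : Fin D, i < j → L i j = 0) (hdiag : ∀ j, c₀ ≤ |L j j|) :
    (c₀ ^ D) ^ 2 ≤ (L * Lᵀ).det := by
  rw [det_cov L htri]
  have h1 : c₀ ^ D ≤ ∏ j, |L j j| := by
    calc c₀ ^ D = ∏ _j : Fin D, c₀ := by simp
      _ ≤ ∏ j, |L j j| := Finset.prod_le_prod (fun _ _ => hc₀.le) (fun j _ => hdiag j)
  exact pow_le_pow_left₀ (pow_pos hc₀ D).le h1 2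

lemma rpow_det_cov {D : ℕ} {c₀ : ℝ} (hc₀ : 0 < c₀) (L : Matrix (Fin D) (Fin D) ℝ)
    (htri : ∀ i j : Fin D, i < j → L i j = 0) (hdiag : ∀ j, c₀ ≤ |L j j|) :
    ((L * Lᵀ).det : ℝ) ^ (-(1:ℝ)/2) = (∏ j, |L j j|)⁻¹ := by
  rw [det_cov L htri]
  have hx : (0:ℝ) ≤ ∏ j, |L j j| := Finset.prod_nonneg fun j _ => abs_nonneg _
  rw [← Real.rpow_natCast (∏ j, |L j j|) 2, ← Real.rpow_mul hx]
  norm_num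
  exact (Real.rpow_neg_one _)

lemma abs_det_le {n : ℕ} (M : Matrix (Fin n) (Fin n) ℝ) (R : ℝ)
    (h : ∀ i j, |M i j| ≤ R) : |M.det| ≤ (Nat.factorial n) * R ^ n := by
  rw [Matrix.det_apply]
  refine (Finset.abs_sum_le_sum_abs _ _).trans ?_
  have hb : ∀ σ : Equiv.Perm (Fin n), |Equiv.Perm.sign σ • ∏ i, M (σ i) i| ≤ R ^ n := by
    intro σ
    have h1 : |∏ i, M (σ i) i| ≤ R ^ n := by
      rw [abs_prod]
      calc ∏ i, |M (σ i) i| ≤ ∏ _i : Fin n, R :=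
            Finset.prod_le_prod (fun _ _ => abs_nonneg _) (fun i _ => h _ _)
        _ = R ^ n := by simp
    rcases Int.units_eq_one_or (Equiv.Perm.sign σ) with hs | hs <;> simp [hs] <;> simpa using h1
  calc (∑ σ : Equiv.Perm (Fin n), |Equiv.Perm.sign σ • ∏ i, M (σ i) i|)
      ≤ ∑ _σ : Equiv.Perm (Fin n), R ^ n := Finset.sum_le_sum (fun σ _ => hb σ)
    _ = (Nat.factorial n) * R ^ n := by simp [Finset.sum_const, Fintype.card_perm]

-- inverse entry bound for a matrix with entries ≤ E and det ≥ dlow > 0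
lemma inv_entry_bound {n : ℕ} (M : Matrix (Fin n) (Fin n) ℝ) (E dlow : ℝ)
    (hE : 0 ≤ E) (hdlow : 0 < dlow) (hdet : dlow ≤ M.det) (hent : ∀ i j, |M i j| ≤ E) :
    ∀ i j, |M⁻¹ i j| ≤ (Nat.factorial n) * (max E 1) ^ n / dlow := by
  intro i j
  have hdet0 : M.det ≠ 0 := (hdlow.trans_le hdet).ne'
  rw [Matrix.inv_def, Matrix.smul_apply, Ring.inverse_eq_inv]
  rw [smul_eq_mul, abs_mul, abs_inv]
  have hadj : |M.adjugate i j| ≤ (Nat.factorial n) * (max E 1) ^ n := by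
    rw [Matrix.adjugate_apply]
    refine abs_det_le _ _ fun i' j' => ?_
    rw [Matrix.updateRow_apply]
    split_ifs
    · rcases eq_or_ne j' i with h | h <;> simp [Pi.single_apply, h] <;> exact le_max_right _ _
    · exact (hent i' j').trans (le_max_left _ _)
  have h1 : |M.det|⁻¹ ≤ dlow⁻¹ := by
    rw [abs_of_pos (lt_of_lt_of_le hdlow hdet)]
    exact inv_anti₀ hdlow hdet
  calc |M.det|⁻¹ * |M.adjugate i j| ≤ dlow⁻¹ * ((Nat.factorial n) * (max E 1) ^ n) :=
        mul_le_mul h1 hadj (abs_nonneg _) (by positivity)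
    _ = (Nat.factorial n) * (max E 1) ^ n / dlow := by ring

-- coercivity
lemma quad_form_facts {D : ℕ} {c₀ B : ℝ} (hc₀ : 0 < c₀) (hB : 0 < B)
    (L : Matrix (Fin D) (Fin D) ℝ)
    (htri : ∀ i j : Fin D, i < j → L i j = 0)
    (hdiag : ∀ j, c₀ ≤ |L j j|) (hbnd : ∀ j k, |L j k| ≤ B) (y : Fin D → ℝ) :
    0 ≤ y ⬝ᵥ ((L * Lᵀ)⁻¹ *ᵥ y) ∧
    (∑ i, (y i) ^ 2) ≤ (D : ℝ) ^ 2 * B ^ 2 * (y ⬝ᵥ ((L * Lᵀ)⁻¹ *ᵥ y)) := by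
  have hdetL : L.det ≠ 0 := by
    have : L.det = ∏ i, L i i := by
      rw [← Matrix.det_transpose]
      have ht : Lᵀ.BlockTriangular id := fun i j hij => htri j i hij
      rw [Matrix.det_of_upperTriangular ht]; simp [Matrix.transpose_apply]
    rw [this]
    refine Finset.prod_ne_zero_iff.2 fun i _ => fun h0 => ?_
    have hh := hdiag i; rw [h0, abs_zero] at hh; linarith
  have hL : IsUnit L.det := isUnit_iff_ne_zero.2 hdetL
  set w : Fin D → ℝ := L⁻¹ *ᵥ y with hw
  have hyw : y = L *ᵥ w := by
    rw [hw, Matrix.mulVec_mulVec, Matrix.mul_nonsing_inv L hL, Matrix.one_mulVec]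
  have hq : y ⬝ᵥ ((L * Lᵀ)⁻¹ *ᵥ y) = ∑ i, (w i) ^ 2 := by
    rw [Matrix.mul_inv_rev, ← Matrix.mulVec_mulVec, Matrix.dotProduct_mulVec,
      ← Matrix.transpose_nonsing_inv, Matrix.vecMul_transpose, ← hw]
    simp [dotProduct, sq]
  constructor
  · rw [hq]; exact Finset.sum_nonneg fun i _ => sq_nonneg _
  · rw [hq]
    have key : ∀ i, (y i) ^ 2 ≤ (D : ℝ) * B ^ 2 * ∑ j, (w j) ^ 2 := by
      intro i
      have : y i = ∑ j, L i j * w j := by rw [hyw]; rfl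
      rw [this]
      calc (∑ j, L i j * w j) ^ 2 ≤ (∑ j, (L i j) ^ 2) * ∑ j, (w j) ^ 2 :=
            Finset.sum_mul_sq_le_sq_mul_sq _ _ _
        _ ≤ ((D : ℝ) * B ^ 2) * ∑ j, (w j) ^ 2 := by
            refine mul_le_mul_of_nonneg_right ?_ (Finset.sum_nonneg fun j _ => sq_nonneg _)
            calc (∑ j, (L i j) ^ 2) ≤ ∑ _j : Fin D, B ^ 2 := by
                  refine Finset.sum_le_sum fun j _ => ?_
                  rw [← sq_abs]; exact pow_le_pow_left₀ (abs_nonneg _) (hbnd i j) 2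
              _ = (D : ℝ) * B ^ 2 := by simp [mul_comm]
    calc (∑ i, (y i) ^ 2) ≤ ∑ _i : Fin D, (D : ℝ) * B ^ 2 * ∑ j, (w j) ^ 2 :=
          Finset.sum_le_sum fun i _ => key i
      _ = (D : ℝ) ^ 2 * B ^ 2 * ∑ j, (w j) ^ 2 := by
          simp [Finset.sum_const]; ring


lemma mul_entry_bound {D : ℕ} (A B : Matrix (Fin D) (Fin D) ℝ) (a b : ℝ)
    (ha0 : 0 ≤ a) (hb0 : 0 ≤ b)
    (hA : ∀ i j, |A i j| ≤ a) (hB : ∀ i j, |B i j| ≤ b) :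
    ∀ i j, |(A * B) i j| ≤ D * a * b := by
  intro i j
  rw [Matrix.mul_apply]
  refine (Finset.abs_sum_le_sum_abs _ _).trans ?_
  calc (∑ k, |A i k * B k j|) ≤ ∑ _k : Fin D, a * b := by
        refine Finset.sum_le_sum fun k _ => ?_
        rw [abs_mul]; exact mul_le_mul (hA i k) (hB k j) (abs_nonneg _) ha0
    _ = D * a * b := by simp [Finset.sum_const]; ring

lemma dot_quad_bound {D : ℕ} (M : Matrix (Fin D) (Fin D) ℝ) (m : ℝ) (hm0 : 0 ≤ m)
    (hm : ∀ i j, |M i j| ≤ m) (y : Fin D → ℝ) :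
    |y ⬝ᵥ (M *ᵥ y)| ≤ m * ((D : ℝ) * ∑ i, (y i) ^ 2) := by
  have h1 : |y ⬝ᵥ (M *ᵥ y)| ≤ m * (∑ i, |y i|) ^ 2 := by
    rw [dotProduct]
    refine (Finset.abs_sum_le_sum_abs _ _).trans ?_
    have hrow : ∀ i, |y i * (M *ᵥ y) i| ≤ |y i| * (m * ∑ j, |y j|) := by
      intro i
      rw [abs_mul]
      refine mul_le_mul_of_nonneg_left ?_ (abs_nonneg _)
      rw [Matrix.mulVec, dotProduct]
      refine (Finset.abs_sum_le_sum_abs _ _).trans ?_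
      rw [Finset.mul_sum]
      refine Finset.sum_le_sum fun j _ => ?_
      rw [abs_mul]
      exact mul_le_mul_of_nonneg_right (hm i j) (abs_nonneg _)
    calc (∑ i, |y i * (M *ᵥ y) i|) ≤ ∑ i, |y i| * (m * ∑ j, |y j|) :=
          Finset.sum_le_sum fun i _ => hrow i
      _ = m * (∑ i, |y i|) ^ 2 := by rw [← Finset.sum_mul]; ring
  refine h1.trans ?_
  have h2 : (∑ i, |y i|) ^ 2 ≤ (D : ℝ) * ∑ i, (y i) ^ 2 := by
    have := sq_sum_le_card_mul_sum_sq (s := (Finset.univ : Finset (Fin D)))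
      (f := fun i => |y i|)
    simpa [sq_abs] using this
  exact mul_le_mul_of_nonneg_left h2 hm0

lemma one_add_le_mul_exp {a t : ℝ} (ha : 0 < a) (ht : 0 ≤ t) :
    1 + t ≤ (1 + a⁻¹) * Real.exp (a * t) := by
  have h1 : (1:ℝ) ≤ Real.exp (a * t) := Real.one_le_exp (by positivity)
  have h2 : a * t ≤ Real.exp (a * t) := by
    have := Real.add_one_le_exp (a * t); linarith
  have h3 : t ≤ a⁻¹ * Real.exp (a * t) := by
    rw [← mul_le_mul_iff_right₀ ha, ← mul_assoc, mul_inv_cancel₀ ha.ne', one_mul]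
    exact h2
  nlinarith [Real.exp_nonneg (a * t)]

set_option maxHeartbeats 1000000 in
lemma gaussian_diff_bound (D : ℕ) (hD : 2 ≤ D) (c₀ B : ℝ) (hc₀ : 0 < c₀) (hB : 0 < B) :
    ∃ K > 0, ∀ L₀ L₁ : Matrix (Fin D) (Fin D) ℝ,
      (∀ i j : Fin D, i < j → L₀ i j = 0) → (∀ i j : Fin D, i < j → L₁ i j = 0) →
      (∀ j : Fin D, c₀ ≤ |L₀ j j|) → (∀ j : Fin D, c₀ ≤ |L₁ j j|) →
      (∀ j k : Fin D, |L₀ j k| ≤ B) → (∀ j k : Fin D, |L₁ j k| ≤ B) →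
      ∀ d : ℝ, 0 ≤ d → (∀ j k : Fin D, |L₀ j k - L₁ j k| ≤ d) →
      ∀ y : Fin D → ℝ,
        |gaussianDensity D 0 (L₀ * L₀ᵀ) y - gaussianDensity D 0 (L₁ * L₁ᵀ) y|
          ≤ K * d * Real.exp (-(4 * (D:ℝ)^2 * B^2)⁻¹ * ∑ i, (y i) ^ 2) := by
  have hDpos : (0:ℝ) < (D:ℝ) := by
    have : (2:ℝ) ≤ (D:ℝ) := by exact_mod_cast hD
    linarith
  have hDB : (0:ℝ) < (D:ℝ)^2 * B^2 := by positivity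
  set β : ℝ := ((D:ℝ)^2 * B^2)⁻¹ with hβ
  have hβpos : 0 < β := by positivity
  set Ac : ℝ := (2 * Real.pi) ^ (-(D : ℝ) / 2) with hAc
  have hAcpos : 0 < Ac := Real.rpow_pos_of_pos (by positivity) _
  set R : ℝ := max c₀⁻¹ 1 with hR
  have hR1 : 1 ≤ R := le_max_right _ _
  have hRpos : (0:ℝ) < R := lt_of_lt_of_le one_pos hR1
  set M₁ : ℝ := Ac * (R ^ D * ((D:ℝ) * (c₀⁻¹ * c₀⁻¹))) with hM₁
  have hM₁pos : 0 < M₁ := by positivity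
  set Minv : ℝ := (Nat.factorial D) * (max ((D:ℝ) * B ^ 2) 1) ^ D / (c₀ ^ D) ^ 2 with hMinv
  have hMinvpos : 0 < Minv := by
    have h1 : (0:ℝ) < (Nat.factorial D : ℝ) := by positivity
    have h2 : (0:ℝ) < max ((D:ℝ) * B ^ 2) 1 := lt_of_lt_of_le one_pos (le_max_right _ _)
    positivity
  set Amax : ℝ := Ac * (c₀ ^ D)⁻¹ with hAmax
  have hAmaxpos : 0 < Amax := by positivity
  set Mq : ℝ := (D:ℝ) * ((D:ℝ) * Minv * (2 * (D:ℝ) * B)) * Minv * (D:ℝ) with hMq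
  have hMqpos : 0 < Mq := by positivity
  set K : ℝ := (M₁ + Amax * (Mq / 2)) * (1 + (β/4)⁻¹) with hK
  have hKpos : 0 < K := by positivity
  refine ⟨K, hKpos, ?_⟩
  intro L₀ L₁ htri₀ htri₁ hdiag₀ hdiag₁ hbnd₀ hbnd₁ d hd hdjk y
  set t : ℝ := ∑ i, (y i) ^ 2 with ht
  have htnn : 0 ≤ t := Finset.sum_nonneg fun i _ => sq_nonneg _
  set S₀ := L₀ * L₀ᵀ with hS₀
  set S₁ := L₁ * L₁ᵀ with hS₁
  set q₀ : ℝ := y ⬝ᵥ (S₀⁻¹ *ᵥ y) with hq₀d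
  set q₁ : ℝ := y ⬝ᵥ (S₁⁻¹ *ᵥ y) with hq₁d
  obtain ⟨hq₀nn, hq₀c⟩ := quad_form_facts hc₀ hB L₀ htri₀ hdiag₀ hbnd₀ y
  obtain ⟨hq₁nn, hq₁c⟩ := quad_form_facts hc₀ hB L₁ htri₁ hdiag₁ hbnd₁ y
  rw [← hS₀, ← hq₀d] at hq₀nn hq₀c
  rw [← hS₁, ← hq₁d] at hq₁nn hq₁c
  rw [← ht] at hq₀c hq₁c
  have hβq₀ : β * t ≤ q₀ := by
    rw [hβ, inv_mul_le_iff₀ hDB]; exact hq₀c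
  have hβq₁ : β * t ≤ q₁ := by
    rw [hβ, inv_mul_le_iff₀ hDB]; exact hq₁c
  set P₀ : ℝ := ∏ j, |L₀ j j| with hP₀
  set P₁ : ℝ := ∏ j, |L₁ j j| with hP₁
  have hP₀ge : c₀ ^ D ≤ P₀ := by
    rw [hP₀]
    calc c₀ ^ D = ∏ _j : Fin D, c₀ := by simp
      _ ≤ ∏ j, |L₀ j j| := Finset.prod_le_prod (fun _ _ => hc₀.le) (fun j _ => hdiag₀ j)
  have hP₁ge : c₀ ^ D ≤ P₁ := by
    rw [hP₁]
    calc c₀ ^ D = ∏ _j : Fin D, c₀ := by simp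
      _ ≤ ∏ j, |L₁ j j| := Finset.prod_le_prod (fun _ _ => hc₀.le) (fun j _ => hdiag₁ j)
  have hc₀D : (0:ℝ) < c₀ ^ D := by positivity
  have hP₀pos : 0 < P₀ := lt_of_lt_of_le hc₀D hP₀ge
  have hP₁pos : 0 < P₁ := lt_of_lt_of_le hc₀D hP₁ge
  -- densities
  have hg₀ : gaussianDensity D 0 S₀ y = Ac * P₀⁻¹ * Real.exp (-(1/2) * q₀) := by
    rw [hq₀d, hS₀]
    simp only [gaussianDensity, sub_zero]
    rw [rpow_det_cov hc₀ L₀ htri₀ hdiag₀, ← hAc, ← hP₀]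
  have hg₁ : gaussianDensity D 0 S₁ y = Ac * P₁⁻¹ * Real.exp (-(1/2) * q₁) := by
    rw [hq₁d, hS₁]
    simp only [gaussianDensity, sub_zero]
    rw [rpow_det_cov hc₀ L₁ htri₁ hdiag₁, ← hAc, ← hP₁]
  -- |P₀⁻¹ - P₁⁻¹| bound
  have hPdiff : |P₀⁻¹ - P₁⁻¹| ≤ R ^ D * ((D:ℝ) * (c₀⁻¹ * c₀⁻¹ * d)) := by
    have h0 : P₀⁻¹ = ∏ j, |L₀ j j|⁻¹ := by rw [hP₀, ← Finset.prod_inv_distrib]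
    have h1 : P₁⁻¹ = ∏ j, |L₁ j j|⁻¹ := by rw [hP₁, ← Finset.prod_inv_distrib]
    rw [h0, h1]
    have hcard : (Finset.univ : Finset (Fin D)).card = D := by simp
    have key := abs_prod_sub_prod_le Finset.univ (fun j => |L₀ j j|⁻¹) (fun j => |L₁ j j|⁻¹) R hR1
      (fun j _ => by
        rw [abs_inv, abs_abs]
        exact le_max_of_le_left (inv_anti₀ hc₀ (hdiag₀ j)))
      (fun j _ => by
        rw [abs_inv, abs_abs]
        exact le_max_of_le_left (inv_anti₀ hc₀ (hdiag₁ j)))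
    rw [hcard] at key
    refine key.trans ?_
    refine mul_le_mul_of_nonneg_left ?_ (by positivity)
    have hterm : ∀ j : Fin D, |(|L₀ j j|)⁻¹ - (|L₁ j j|)⁻¹| ≤ c₀⁻¹ * c₀⁻¹ * d := by
      intro j
      have hx : c₀ ≤ |L₀ j j| := hdiag₀ j
      have hy : c₀ ≤ |L₁ j j| := hdiag₁ j
      have hx0 : (0:ℝ) < |L₀ j j| := lt_of_lt_of_le hc₀ hx
      have hy0 : (0:ℝ) < |L₁ j j| := lt_of_lt_of_le hc₀ hy
      rw [inv_sub_inv hx0.ne' hy0.ne', abs_div]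
      have hnum : |(|L₁ j j| - |L₀ j j|)| ≤ d := by
        refine (abs_abs_sub_abs_le_abs_sub _ _).trans ?_
        rw [abs_sub_comm]; exact hdjk j j
      have hden : c₀ * c₀ ≤ |(|L₀ j j| * |L₁ j j|)| := by
        rw [abs_of_pos (by positivity)]
        exact mul_le_mul hx hy hc₀.le hx0.le
      calc |(|L₁ j j| - |L₀ j j|)| / |(|L₀ j j| * |L₁ j j|)| ≤ d / (c₀ * c₀) :=
            div_le_div₀ hd hnum (by positivity) hden
        _ = c₀⁻¹ * c₀⁻¹ * d := by field_simp
    calc (∑ j, |(|L₀ j j|)⁻¹ - (|L₁ j j|)⁻¹|) ≤ ∑ _j : Fin D, c₀⁻¹ * c₀⁻¹ * d :=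
          Finset.sum_le_sum fun j _ => hterm j
      _ = (D:ℝ) * (c₀⁻¹ * c₀⁻¹ * d) := by simp
  -- inverse matrices
  have hdet₀ : (c₀ ^ D) ^ 2 ≤ S₀.det := by rw [hS₀]; exact det_cov_pos hc₀ L₀ htri₀ hdiag₀
  have hdet₁ : (c₀ ^ D) ^ 2 ≤ S₁.det := by rw [hS₁]; exact det_cov_pos hc₀ L₁ htri₁ hdiag₁
  have hU₀ : IsUnit S₀.det := isUnit_iff_ne_zero.2 (lt_of_lt_of_le (by positivity) hdet₀).ne'
  have hU₁ : IsUnit S₁.det := isUnit_iff_ne_zero.2 (lt_of_lt_of_le (by positivity) hdet₁).ne'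
  have hcov₀ : ∀ i j, |S₀ i j| ≤ (D:ℝ) * B ^ 2 := by
    rw [hS₀]; exact cov_entry_bound hB.le L₀ hbnd₀
  have hcov₁ : ∀ i j, |S₁ i j| ≤ (D:ℝ) * B ^ 2 := by
    rw [hS₁]; exact cov_entry_bound hB.le L₁ hbnd₁
  have hinv₀ : ∀ i j, |S₀⁻¹ i j| ≤ Minv := by
    rw [hMinv]
    exact inv_entry_bound S₀ ((D:ℝ) * B ^ 2) ((c₀ ^ D) ^ 2) (by positivity) (by positivity)
      hdet₀ hcov₀
  have hinv₁ : ∀ i j, |S₁⁻¹ i j| ≤ Minv := by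
    rw [hMinv]
    exact inv_entry_bound S₁ ((D:ℝ) * B ^ 2) ((c₀ ^ D) ^ 2) (by positivity) (by positivity)
      hdet₁ hcov₁
  -- difference of covariances
  have hΔS : ∀ i j, |(S₁ - S₀) i j| ≤ 2 * (D:ℝ) * B * d := by
    intro i j
    rw [Matrix.sub_apply, hS₀, hS₁, Matrix.mul_apply, Matrix.mul_apply, ← Finset.sum_sub_distrib]
    refine (Finset.abs_sum_le_sum_abs _ _).trans ?_
    have hterm : ∀ m, |L₁ i m * L₁ᵀ m j - L₀ i m * L₀ᵀ m j| ≤ 2 * B * d := by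
      intro m
      rw [Matrix.transpose_apply, Matrix.transpose_apply]
      have e : L₁ i m * L₁ j m - L₀ i m * L₀ j m
          = L₁ i m * (L₁ j m - L₀ j m) + (L₁ i m - L₀ i m) * L₀ j m := by ring
      rw [e]
      refine (abs_add_le _ _).trans ?_
      rw [abs_mul, abs_mul]
      have h1 : |L₁ i m| * |L₁ j m - L₀ j m| ≤ B * d := by
        refine mul_le_mul (hbnd₁ i m) ?_ (abs_nonneg _) hB.le
        rw [abs_sub_comm]; exact hdjk j m
      have h2 : |L₁ i m - L₀ i m| * |L₀ j m| ≤ d * B := by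
        refine mul_le_mul ?_ (hbnd₀ j m) (abs_nonneg _) hd
        rw [abs_sub_comm]; exact hdjk i m
      linarith
    calc (∑ m, |L₁ i m * L₁ᵀ m j - L₀ i m * L₀ᵀ m j|) ≤ ∑ _m : Fin D, 2 * B * d :=
          Finset.sum_le_sum fun m _ => hterm m
      _ = 2 * (D:ℝ) * B * d := by simp [Finset.sum_const]; ring
  -- inverse difference identity
  have hinvdiff : S₀⁻¹ - S₁⁻¹ = S₀⁻¹ * (S₁ - S₀) * S₁⁻¹ := by
    rw [Matrix.mul_sub, Matrix.sub_mul, Matrix.mul_assoc, Matrix.mul_nonsing_inv _ hU₁,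
      Matrix.mul_one]
    have h : S₀⁻¹ * S₀ * S₁⁻¹ = S₁⁻¹ := by
      rw [Matrix.nonsing_inv_mul _ hU₀, Matrix.one_mul]
    rw [h]
  have hinvdiff_bnd : ∀ i j,
      |(S₀⁻¹ - S₁⁻¹) i j| ≤ (D:ℝ) * ((D:ℝ) * Minv * (2 * (D:ℝ) * B * d)) * Minv := by
    rw [hinvdiff]
    exact mul_entry_bound _ _ _ _ (by positivity) hMinvpos.le
      (mul_entry_bound _ _ _ _ hMinvpos.le (by positivity) hinv₀ hΔS) hinv₁
  -- quadratic difference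
  have hqdiff : |q₀ - q₁| ≤ Mq * d * t := by
    have e : q₀ - q₁ = y ⬝ᵥ ((S₀⁻¹ - S₁⁻¹) *ᵥ y) := by
      rw [hq₀d, hq₁d, Matrix.sub_mulVec, dotProduct_sub]
    rw [e]
    have key := dot_quad_bound (S₀⁻¹ - S₁⁻¹)
      ((D:ℝ) * ((D:ℝ) * Minv * (2 * (D:ℝ) * B * d)) * Minv) (by positivity) hinvdiff_bnd y
    rw [← ht] at key
    refine key.trans (le_of_eq ?_)
    rw [hMq]; ring
  -- exponential difference
  have hexp₀ : -(1/2) * q₀ ≤ -(β/2) * t := by linarith only [hβq₀]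
  have hexp₁ : -(1/2) * q₁ ≤ -(β/2) * t := by linarith only [hβq₁]
  have hEdiff : |Real.exp (-(1/2) * q₀) - Real.exp (-(1/2) * q₁)|
      ≤ Real.exp (-(β/2) * t) * ((Mq / 2) * d * t) := by
    refine (abs_exp_sub_exp_le hexp₀ hexp₁).trans ?_
    refine mul_le_mul_of_nonneg_left ?_ (Real.exp_nonneg _)
    have e : |(-(1/2) * q₀) - (-(1/2) * q₁)| = (1/2) * |q₀ - q₁| := by
      rw [show (-(1/2) * q₀) - (-(1/2) * q₁) = -(1/2) * (q₀ - q₁) by ring, abs_mul]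
      norm_num
    rw [e]
    linarith only [hqdiff]
  -- assemble
  have hE₀le : Real.exp (-(1/2) * q₀) ≤ Real.exp (-(β/2) * t) := Real.exp_le_exp.2 hexp₀
  have hA₁le : Ac * P₁⁻¹ ≤ Amax := by
    rw [hAmax]
    exact mul_le_mul_of_nonneg_left (inv_anti₀ hc₀D hP₁ge) hAcpos.le
  have hsplit : gaussianDensity D 0 S₀ y - gaussianDensity D 0 S₁ y
      = Ac * (P₀⁻¹ - P₁⁻¹) * Real.exp (-(1/2) * q₀)
        + (Ac * P₁⁻¹) * (Real.exp (-(1/2) * q₀) - Real.exp (-(1/2) * q₁)) := by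
    rw [hg₀, hg₁]; ring
  rw [hsplit]
  have hb1 : |Ac * (P₀⁻¹ - P₁⁻¹) * Real.exp (-(1/2) * q₀)|
      ≤ M₁ * d * Real.exp (-(β/2) * t) := by
    rw [abs_mul, abs_mul, abs_of_pos hAcpos, abs_of_pos (Real.exp_pos _)]
    calc Ac * |P₀⁻¹ - P₁⁻¹| * Real.exp (-(1/2) * q₀)
        ≤ Ac * (R ^ D * ((D:ℝ) * (c₀⁻¹ * c₀⁻¹ * d))) * Real.exp (-(β/2) * t) := by
          refine mul_le_mul (mul_le_mul_of_nonneg_left hPdiff hAcpos.le) hE₀le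
            (Real.exp_nonneg _) (by positivity)
      _ = M₁ * d * Real.exp (-(β/2) * t) := by rw [hM₁]; ring
  have hb2 : |(Ac * P₁⁻¹) * (Real.exp (-(1/2) * q₀) - Real.exp (-(1/2) * q₁))|
      ≤ Amax * ((Mq / 2) * d * t) * Real.exp (-(β/2) * t) := by
    rw [abs_mul, abs_of_pos (by positivity : (0:ℝ) < Ac * P₁⁻¹)]
    calc (Ac * P₁⁻¹) * |Real.exp (-(1/2) * q₀) - Real.exp (-(1/2) * q₁)|
        ≤ Amax * (Real.exp (-(β/2) * t) * ((Mq / 2) * d * t)) :=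
          mul_le_mul hA₁le hEdiff (abs_nonneg _) hAmaxpos.le
      _ = Amax * ((Mq / 2) * d * t) * Real.exp (-(β/2) * t) := by ring
  have hexpeq : -(4 * (D:ℝ)^2 * B^2)⁻¹ * t = -(β/4) * t + 0 := by
    rw [hβ, add_zero,
      show (4 * (D:ℝ)^2 * B^2) = ((D:ℝ)^2 * B^2) * 4 by ring, mul_inv, div_eq_mul_inv]
  have hfinal : (M₁ * d + Amax * ((Mq / 2) * d * t)) * Real.exp (-(β/2) * t)
      ≤ K * d * Real.exp (-(β/4) * t) := by
    have ha1 : 0 ≤ M₁ * (d * t) := mul_nonneg hM₁pos.le (mul_nonneg hd htnn)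
    have ha2 : 0 ≤ Amax * (Mq / 2) * d :=
      mul_nonneg (mul_nonneg hAmaxpos.le (by positivity)) hd
    have h1 : M₁ * d + Amax * ((Mq / 2) * d * t) ≤ (M₁ + Amax * (Mq / 2)) * d * (1 + t) := by
      have e : (M₁ + Amax * (Mq / 2)) * d * (1 + t)
          = (M₁ * d + Amax * ((Mq / 2) * d * t)) + (M₁ * (d * t) + Amax * (Mq / 2) * d) := by
        ring
      rw [e]; linarith only [ha1, ha2]
    have h2 : (1 + t) ≤ (1 + (β/4)⁻¹) * Real.exp ((β/4) * t) :=
      one_add_le_mul_exp (by positivity) htnn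
    calc (M₁ * d + Amax * ((Mq / 2) * d * t)) * Real.exp (-(β/2) * t)
        ≤ ((M₁ + Amax * (Mq / 2)) * d * (1 + t)) * Real.exp (-(β/2) * t) :=
          mul_le_mul_of_nonneg_right h1 (Real.exp_nonneg _)
      _ ≤ ((M₁ + Amax * (Mq / 2)) * d * ((1 + (β/4)⁻¹) * Real.exp ((β/4) * t)))
            * Real.exp (-(β/2) * t) := by
          refine mul_le_mul_of_nonneg_right (mul_le_mul_of_nonneg_left h2 (by positivity))
            (Real.exp_nonneg _)
      _ = K * d * (Real.exp ((β/4) * t) * Real.exp (-(β/2) * t)) := by rw [hK]; ring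
      _ = K * d * Real.exp (-(β/4) * t) := by
          rw [← Real.exp_add]
          congr 1
          ring
  calc |Ac * (P₀⁻¹ - P₁⁻¹) * Real.exp (-(1/2) * q₀)
        + (Ac * P₁⁻¹) * (Real.exp (-(1/2) * q₀) - Real.exp (-(1/2) * q₁))|
      ≤ M₁ * d * Real.exp (-(β/2) * t) + Amax * ((Mq / 2) * d * t) * Real.exp (-(β/2) * t) :=
        (abs_add_le _ _).trans (add_le_add hb1 hb2)
    _ = (M₁ * d + Amax * ((Mq / 2) * d * t)) * Real.exp (-(β/2) * t) := by ring
    _ ≤ K * d * Real.exp (-(β/4) * t) := hfinal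
    _ = K * d * Real.exp (-(4 * (D:ℝ)^2 * B^2)⁻¹ * t) := by
        rw [hexpeq, add_zero]

/-- Hellinger bound `h²(p₀,p₁) ≤ C ‖L₀ − L₁‖_∞` of Lemma B.1. -/
theorem hellinger_le_of_cholesky_close
    (D : ℕ) (hD : 2 ≤ D) (c₀ B : ℝ) (hc₀ : 0 < c₀) (hB : 0 < B) :
    ∃ C > 0, ∀ L₀ L₁ : Matrix (Fin D) (Fin D) ℝ,
      (∀ i j : Fin D, i < j → L₀ i j = 0) → (∀ i j : Fin D, i < j → L₁ i j = 0) →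
      (∀ j : Fin D, c₀ ≤ |L₀ j j|) → (∀ j : Fin D, c₀ ≤ |L₁ j j|) →
      (∀ j k : Fin D, |L₀ j k| ≤ B) → (∀ j k : Fin D, |L₁ j k| ≤ B) →
      (1 / 2) * ∫ y : Fin D → ℝ,
          (Real.sqrt (gaussianDensity D 0 (L₀ * L₀ᵀ) y)
            - Real.sqrt (gaussianDensity D 0 (L₁ * L₁ᵀ) y)) ^ 2
        ≤ C * ⨆ j : Fin D, ⨆ k : Fin D, |L₀ j k - L₁ j k| := by
  obtain ⟨K, hKpos, hKbnd⟩ := gaussian_diff_bound D hD c₀ B hc₀ hB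
  have hDpos : (0:ℝ) < (D:ℝ) := by
    have : (2:ℝ) ≤ (D:ℝ) := by exact_mod_cast hD
    linarith
  set a : ℝ := (4 * (D:ℝ)^2 * B^2)⁻¹ with ha
  have hapos : 0 < a := by positivity
  have hGint : Integrable (fun y : Fin D → ℝ => Real.exp (-a * ∑ i, (y i)^2)) := by
    have e : (fun y : Fin D → ℝ => Real.exp (-a * ∑ i, (y i)^2))
        = fun y : Fin D → ℝ => ∏ i, Real.exp (-a * (y i)^2) := by
      funext y
      rw [← Real.exp_sum, Finset.mul_sum]
    rw [e]
    exact Integrable.fintype_prod (f := fun (_ : Fin D) (x : ℝ) => Real.exp (-a * x^2))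
      (fun i => integrable_exp_neg_mul_sq hapos)
  set J : ℝ := ∫ y : Fin D → ℝ, Real.exp (-a * ∑ i, (y i)^2) with hJ
  have hJnn : 0 ≤ J := integral_nonneg fun y => Real.exp_nonneg _
  refine ⟨K * J + 1, by positivity, ?_⟩
  intro L₀ L₁ htri₀ htri₁ hdiag₀ hdiag₁ hbnd₀ hbnd₁
  set δ : ℝ := ⨆ j : Fin D, ⨆ k : Fin D, |L₀ j k - L₁ j k| with hδ
  have hδjk : ∀ j k : Fin D, |L₀ j k - L₁ j k| ≤ δ := by
    intro j k
    have h1 : |L₀ j k - L₁ j k| ≤ ⨆ k : Fin D, |L₀ j k - L₁ j k| :=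
      le_ciSup (f := fun k : Fin D => |L₀ j k - L₁ j k|)
        (Set.Finite.bddAbove (Set.finite_range _)) k
    exact h1.trans (le_ciSup (f := fun j : Fin D => ⨆ k : Fin D, |L₀ j k - L₁ j k|)
      (Set.Finite.bddAbove (Set.finite_range _)) j)
  have hD0 : 0 < D := by omega
  have hδ0 : 0 ≤ δ := le_trans (abs_nonneg _) (hδjk ⟨0, hD0⟩ ⟨0, hD0⟩)
  have hp₀nn : ∀ y, 0 ≤ gaussianDensity D 0 (L₀ * L₀ᵀ) y := by
    intro y
    refine mul_nonneg (mul_nonneg ?_ ?_) (Real.exp_nonneg _)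
    · exact Real.rpow_nonneg (by positivity) _
    · exact Real.rpow_nonneg (by rw [det_cov L₀ htri₀]; positivity) _
  have hp₁nn : ∀ y, 0 ≤ gaussianDensity D 0 (L₁ * L₁ᵀ) y := by
    intro y
    refine mul_nonneg (mul_nonneg ?_ ?_) (Real.exp_nonneg _)
    · exact Real.rpow_nonneg (by positivity) _
    · exact Real.rpow_nonneg (by rw [det_cov L₁ htri₁]; positivity) _
  have hfg : ∀ y : Fin D → ℝ,
      (Real.sqrt (gaussianDensity D 0 (L₀ * L₀ᵀ) y)
        - Real.sqrt (gaussianDensity D 0 (L₁ * L₁ᵀ) y)) ^ 2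
      ≤ K * δ * Real.exp (-a * ∑ i, (y i)^2) := by
    intro y
    refine (sq_sqrt_sub_sqrt_le (hp₀nn y) (hp₁nn y)).trans ?_
    exact hKbnd L₀ L₁ htri₀ htri₁ hdiag₀ hdiag₁ hbnd₀ hbnd₁ δ hδ0 hδjk y
  have hint : (∫ y : Fin D → ℝ,
      (Real.sqrt (gaussianDensity D 0 (L₀ * L₀ᵀ) y)
        - Real.sqrt (gaussianDensity D 0 (L₁ * L₁ᵀ) y)) ^ 2)
      ≤ ∫ y : Fin D → ℝ, K * δ * Real.exp (-a * ∑ i, (y i)^2) := by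
    refine integral_mono_of_nonneg (Filter.Eventually.of_forall fun y => sq_nonneg _)
      (hGint.const_mul (K * δ)) (Filter.Eventually.of_forall hfg)
  have hval : (∫ y : Fin D → ℝ, K * δ * Real.exp (-a * ∑ i, (y i)^2)) = K * δ * J := by
    rw [integral_const_mul]
  have hfnn : 0 ≤ ∫ y : Fin D → ℝ,
      (Real.sqrt (gaussianDensity D 0 (L₀ * L₀ᵀ) y)
        - Real.sqrt (gaussianDensity D 0 (L₁ * L₁ᵀ) y)) ^ 2 :=
    integral_nonneg fun y => sq_nonneg _
  have hKJ : K * δ * J ≤ (K * J + 1) * δ := by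
    have e : K * δ * J = (K * J) * δ := by ring
    rw [e]
    exact mul_le_mul_of_nonneg_right (by linarith) hδ0
  calc (1 / 2) * ∫ y : Fin D → ℝ,
          (Real.sqrt (gaussianDensity D 0 (L₀ * L₀ᵀ) y)
            - Real.sqrt (gaussianDensity D 0 (L₁ * L₁ᵀ) y)) ^ 2
      ≤ ∫ y : Fin D → ℝ,
          (Real.sqrt (gaussianDensity D 0 (L₀ * L₀ᵀ) y)
            - Real.sqrt (gaussianDensity D 0 (L₁ * L₁ᵀ) y)) ^ 2 := by linarith
    _ ≤ K * δ * J := by rw [← hval]; exact hint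
    _ ≤ (K * J + 1) * δ := hKJ
end

section
/- Let D ≥ 2, c₀ > 0, and let L be a D×D real lower triangular matrix with |L j j| ≥ c₀ for all j. Let B = max_{j,k} |L j k| and let Σ = L Lᵀ. Then the smallest eigenvalue of Σ satisfies λ_min(Σ) ≥ c₀^{2D} (D−1) / (D^{2(D−1)} B^{2(D−1)}). -/
open Matrix Finset

/-- Eigenvalue lower bound from the proof of Lemma B.1: for lower triangular `L`
with `|L j j| ≥ c₀` and `B = max_{j,k} |L j k|`, every eigenvalue of `Σ = L Lᵀ`
is at least `c₀^{2D} (D−1) / (D^{2(D−1)} B^{2(D−1)})`. -/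
theorem eigenvalue_lower_bound_cholesky
    (D : ℕ) (hD : 2 ≤ D) (c₀ B : ℝ) (hc₀ : 0 < c₀)
    (L : Matrix (Fin D) (Fin D) ℝ)
    (htri : ∀ i j : Fin D, i < j → L i j = 0)
    (hdiag : ∀ j : Fin D, c₀ ≤ |L j j|)
    (hB : B = ⨆ j : Fin D, ⨆ k : Fin D, |L j k|)
    (hHerm : (L * Lᵀ).IsHermitian) :
    ∀ i : Fin D,
      c₀ ^ (2 * D) * ((D : ℝ) - 1) / ((D : ℝ) ^ (2 * (D - 1)) * B ^ (2 * (D - 1)))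
        ≤ hHerm.eigenvalues i := by
  intro i
  have hpsd : (L * Lᵀ).PosSemidef := by
    simpa using Matrix.posSemidef_self_mul_conjTranspose L
  set lam : Fin D → ℝ := hHerm.eigenvalues with hlam
  have hnn : ∀ j, 0 ≤ lam j := hpsd.eigenvalues_nonneg
  -- determinant
  have hdetL : L.det = ∏ j, L j j :=
    Matrix.det_of_lowerTriangular L (fun i j h => htri i j (by simpa using h))
  have hdet : (L * Lᵀ).det = ∏ j, (L j j) ^ 2 := by
    rw [Matrix.det_mul, Matrix.det_transpose, hdetL, ← Finset.prod_mul_distrib]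
    simp [sq]
  have hdet_ge : c₀ ^ (2 * D) ≤ (L * Lᵀ).det := by
    rw [hdet, pow_mul]
    calc (c₀ ^ 2) ^ D = ∏ _j : Fin D, c₀ ^ 2 := by simp
      _ ≤ ∏ j, (L j j) ^ 2 := by
          apply Finset.prod_le_prod (fun j _ => sq_nonneg c₀)
          intro j _
          calc c₀ ^ 2 ≤ |L j j| ^ 2 := by
                apply pow_le_pow_left₀ hc₀.le (hdiag j)
            _ = (L j j) ^ 2 := sq_abs _
  -- bound on entries
  have hLB : ∀ j k : Fin D, |L j k| ≤ B := by
    intro j k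
    rw [hB]
    have h1 : |L j k| ≤ ⨆ k' : Fin D, |L j k'| :=
      le_ciSup (Set.finite_range fun k' : Fin D => |L j k'|).bddAbove k
    exact h1.trans (le_ciSup (Set.finite_range fun j' : Fin D => ⨆ k' : Fin D, |L j' k'|).bddAbove j)
  have hBpos : 0 < B := lt_of_lt_of_le hc₀ ((hdiag ⟨0, by omega⟩).trans (hLB _ _))
  set T : ℝ := (D : ℝ) ^ 2 * B ^ 2 with hT
  have hTpos : 0 < T := by positivity
  -- trace
  have htr : (L * Lᵀ).trace = ∑ j, ∑ k, (L j k) ^ 2 := by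
    simp [Matrix.trace, Matrix.diag, Matrix.mul_apply, sq]
  have htrace_le : (L * Lᵀ).trace ≤ T := by
    rw [htr, hT]
    calc ∑ j : Fin D, ∑ k : Fin D, (L j k) ^ 2
        ≤ ∑ _j : Fin D, ∑ _k : Fin D, B ^ 2 := by
          apply Finset.sum_le_sum; intro j _
          apply Finset.sum_le_sum; intro k _
          calc (L j k) ^ 2 = |L j k| ^ 2 := (sq_abs _).symm
            _ ≤ B ^ 2 := pow_le_pow_left₀ (abs_nonneg _) (hLB j k) 2
      _ = (D : ℝ) ^ 2 * B ^ 2 := by simp [sq]; ring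
  -- trace = sum of eigenvalues
  have hsum : (L * Lᵀ).trace = ∑ j, lam j := by
    simpa using hHerm.trace_eq_sum_eigenvalues
  -- product = det
  have hprod : (L * Lᵀ).det = ∏ j, lam j := by
    simpa using hHerm.det_eq_prod_eigenvalues
  have hlamT : ∀ j, lam j ≤ T := by
    intro j
    calc lam j ≤ ∑ j', lam j' := Finset.single_le_sum (fun j' _ => hnn j') (mem_univ j)
      _ = (L * Lᵀ).trace := hsum.symm
      _ ≤ T := htrace_le
  set s : Finset (Fin D) := Finset.univ.erase i with hs
  have hscard : s.card = D - 1 := by simp [hs]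
  have hDr : ((D : ℝ) - 1) = ((D - 1 : ℕ) : ℝ) := by
    rw [Nat.cast_sub (by omega)]; simp
  have hDr1 : (0 : ℝ) < (D : ℝ) - 1 := by
    rw [hDr]; exact_mod_cast Nat.sub_pos_of_lt (by omega)
  -- exists small eigenvalue in s
  have hex : ∃ j₀ ∈ s, lam j₀ ≤ T / ((D : ℝ) - 1) := by
    by_contra h
    push_neg at h
    have hne : s.Nonempty := by
      rw [← Finset.card_pos, hscard]; omega
    have h1 : ∑ _j ∈ s, T / ((D : ℝ) - 1) < ∑ j ∈ s, lam j :=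
      Finset.sum_lt_sum_of_nonempty hne h
    rw [Finset.sum_const, hscard, nsmul_eq_mul, ← hDr] at h1
    rw [mul_div_cancel₀ _ (ne_of_gt hDr1)] at h1
    have h2 : ∑ j ∈ s, lam j ≤ ∑ j, lam j :=
      Finset.sum_le_sum_of_subset_of_nonneg (Finset.subset_univ s) (fun j _ _ => hnn j)
    have h3 : ∑ j, lam j ≤ T := hsum ▸ htrace_le
    linarith
  obtain ⟨j₀, hj₀s, hj₀⟩ := hex
  have hprod_s : ∏ j ∈ s, lam j ≤ T ^ (D - 1) / ((D : ℝ) - 1) := by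
    rw [← Finset.mul_prod_erase s lam hj₀s]
    have h1 : ∏ j ∈ s.erase j₀, lam j ≤ T ^ (D - 2) := by
      calc ∏ j ∈ s.erase j₀, lam j ≤ ∏ _j ∈ s.erase j₀, T :=
            Finset.prod_le_prod (fun j _ => hnn j) (fun j _ => hlamT j)
        _ = T ^ (s.erase j₀).card := Finset.prod_const T
        _ = T ^ (D - 2) := by
            rw [Finset.card_erase_of_mem hj₀s, hscard]
            congr 1
    calc lam j₀ * ∏ j ∈ s.erase j₀, lam j
        ≤ (T / ((D : ℝ) - 1)) * T ^ (D - 2) := by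
          apply mul_le_mul hj₀ h1 (Finset.prod_nonneg (fun j _ => hnn j))
          positivity
      _ = T ^ (D - 1) / ((D : ℝ) - 1) := by
          rw [div_mul_eq_mul_div, ← pow_succ']
          congr 2
          omega
  have hprodpos : 0 < ∏ j ∈ s, lam j := by
    rcases (Finset.prod_nonneg (fun j _ => hnn j) : 0 ≤ ∏ j ∈ s, lam j).lt_or_eq with h | h
    · exact h
    · exfalso
      have : (L * Lᵀ).det = lam i * ∏ j ∈ s, lam j := by
        rw [hprod, ← Finset.mul_prod_erase Finset.univ lam (mem_univ i)]
      rw [this, ← h] at hdet_ge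
      nlinarith [pow_pos hc₀ (2 * D)]
  have hdenom : (D : ℝ) ^ (2 * (D - 1)) * B ^ (2 * (D - 1)) = T ^ (D - 1) := by
    rw [hT, mul_pow, ← pow_mul, ← pow_mul]
  rw [hdenom]
  rw [div_le_iff₀ (by positivity : (0:ℝ) < T ^ (D - 1))]
  -- goal : c₀^(2D) * ((D:ℝ)-1) ≤ lam i * T^(D-1)
  have key : c₀ ^ (2 * D) ≤ lam i * ∏ j ∈ s, lam j := by
    calc c₀ ^ (2 * D) ≤ (L * Lᵀ).det := hdet_ge
      _ = lam i * ∏ j ∈ s, lam j := by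
          rw [hprod, ← Finset.mul_prod_erase Finset.univ lam (mem_univ i)]
  have h5 : lam i * ∏ j ∈ s, lam j ≤ lam i * (T ^ (D - 1) / ((D : ℝ) - 1)) :=
    mul_le_mul_of_nonneg_left hprod_s (hnn i)
  have h6 : c₀ ^ (2 * D) ≤ lam i * (T ^ (D - 1) / ((D : ℝ) - 1)) := le_trans key h5
  calc c₀ ^ (2 * D) * ((D : ℝ) - 1) ≤ (lam i * (T ^ (D - 1) / ((D : ℝ) - 1))) * ((D : ℝ) - 1) :=
        mul_le_mul_of_nonneg_right h6 hDr1.le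
    _ = lam i * T ^ (D - 1) := by field_simp
end

section
/- Let D ≥ 1, r > 0, h ∈ ℝ, and let q, q', v, v⁺, g, g' ∈ ℝ^D satisfy ‖q‖ = ‖q'‖ = r, ⟨q, v⟩ = 0 and ⟨q', v⁺⟩ = 0. For x with ‖x‖ = r define P(x)w = w − (⟨x,w⟩/r²) · x. Set v⁻ = v − (h/2) · P(q)g and v' = v⁺ − (h/2) · P(q')g', and assume ‖v⁺‖ = ‖v⁻‖. Then ½‖v'‖² − ½‖v‖² = −(h/2) ( ⟨v, g⟩ + ⟨v', g'⟩ ) − (h²/8) ( ‖P(q')g'‖² − ‖P(q)g‖² ). -/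
open scoped RealInnerProductSpace

/-- Single-leapfrog-step energy-difference identity of Spherical HMC
(Appendix C of the paper). -/
theorem sphHMC_leapfrog_energy_difference
    (D : ℕ) (hD : 1 ≤ D) (r h : ℝ) (hr : 0 < r)
    (q q' v vplus g g' : EuclideanSpace ℝ (Fin D))
    (hq : ‖q‖ = r) (hq' : ‖q'‖ = r)
    (hqv : ⟪q, v⟫ = 0) (hq'v : ⟪q', vplus⟫ = 0)
    (P : EuclideanSpace ℝ (Fin D) → EuclideanSpace ℝ (Fin D)
          → EuclideanSpace ℝ (Fin D))
    (hP : ∀ x w, P x w = w - (⟪x, w⟫ / r ^ 2) • x)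
    (vminus v' : EuclideanSpace ℝ (Fin D))
    (hvminus : vminus = v - (h / 2) • P q g)
    (hv' : v' = vplus - (h / 2) • P q' g')
    (hnorm : ‖vplus‖ = ‖vminus‖) :
    (1 / 2) * ‖v'‖ ^ 2 - (1 / 2) * ‖v‖ ^ 2
      = -(h / 2) * (⟪v, g⟫ + ⟪v', g'⟫)
        - (h ^ 2 / 8) * (‖P q' g'‖ ^ 2 - ‖P q g‖ ^ 2) := by
  have hr2 : (r : ℝ) ^ 2 ≠ 0 := pow_ne_zero 2 hr.ne'
  have hqq : ⟪q, q⟫ = r ^ 2 := by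
    rw [real_inner_self_eq_norm_sq, hq]
  have hq'q' : ⟪q', q'⟫ = r ^ 2 := by
    rw [real_inner_self_eq_norm_sq, hq']
  -- v ⟂ q kills the projection correction
  have hvq : ⟪v, q⟫ = 0 := by rw [real_inner_comm]; exact hqv
  have hvq' : ⟪vplus, q'⟫ = 0 := by rw [real_inner_comm]; exact hq'v
  have key1 : ⟪v, P q g⟫ = ⟪v, g⟫ := by
    rw [hP, inner_sub_right, inner_smul_right, hvq]
    ring
  have key2 : ⟪vplus, P q' g'⟫ = ⟪vplus, g'⟫ := by
    rw [hP, inner_sub_right, inner_smul_right, hvq']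
    ring
  -- projection is orthogonal to the base point
  have key0 : ⟪P q' g', q'⟫ = 0 := by
    rw [hP, inner_sub_left, real_inner_smul_left, real_inner_comm g' q', hq'q']
    field_simp
    ring
  -- ⟪P q' g', g'⟫ = ‖P q' g'‖²
  have key3 : ⟪P q' g', g'⟫ = ‖P q' g'‖ ^ 2 := by
    rw [← real_inner_self_eq_norm_sq]
    nth_rewrite 3 [hP q' g']
    rw [inner_sub_right, inner_smul_right, key0]
    ring
  -- norm expansions
  have hexp' : ‖v'‖ ^ 2
      = ‖vplus‖ ^ 2 - 2 * ((h / 2) * ⟪vplus, P q' g'⟫)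
        + (h / 2) ^ 2 * ‖P q' g'‖ ^ 2 := by
    rw [hv', @norm_sub_sq_real, inner_smul_right, norm_smul, mul_pow, Real.norm_eq_abs, sq_abs]
  have hexpm : ‖vminus‖ ^ 2
      = ‖v‖ ^ 2 - 2 * ((h / 2) * ⟪v, P q g⟫)
        + (h / 2) ^ 2 * ‖P q g‖ ^ 2 := by
    rw [hvminus, @norm_sub_sq_real, inner_smul_right, norm_smul, mul_pow, Real.norm_eq_abs, sq_abs]
  have hinner' : ⟪v', g'⟫ = ⟪vplus, g'⟫ - (h / 2) * ‖P q' g'‖ ^ 2 := by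
    rw [hv', inner_sub_left, real_inner_smul_left, key3]
  have hnorm2 : ‖vplus‖ ^ 2 = ‖vminus‖ ^ 2 := by rw [hnorm]
  rw [hexp', hnorm2, hexpm, key1, key2, hinner']
  ring
end

section
/- Let D ≥ 1, r > 0, h ∈ ℝ, and q, v, g, g' ∈ ℝ^D with ‖q‖ = r and ⟨q, v⟩ = 0. For x with ‖x‖ = r define P(x)w = w − (⟨x,w⟩/r²) · x. Set v⁻ = v − (h/2) · P(q)g and assume v⁻ ≠ 0. Define θ = ‖v⁻‖ h / r, q' = cos(θ) · q + (r/‖v⁻‖) sin(θ) · v⁻, v⁺ = −(‖v⁻‖/r) sin(θ) · q + cos(θ) · v⁻, and v' = v⁺ − (h/2) · P(q')g'. Then ‖q'‖ = r, ‖v⁺‖ = ‖v⁻‖, ⟨q', v⁺⟩ = 0, and ⟨q', v'⟩ = 0. -/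
open scoped RealInnerProductSpace

/-- One step of the geometric (leapfrog) integrator (3.3) of Spherical HMC keeps
the position on the sphere `S^{D−1}(r)` and the velocity in the tangent space. -/
theorem sphHMC_leapfrog_stays_on_sphere
    (D : ℕ) (hD : 1 ≤ D) (r h : ℝ) (hr : 0 < r)
    (q v g g' : EuclideanSpace ℝ (Fin D))
    (hq : ‖q‖ = r) (hqv : ⟪q, v⟫ = 0)
    (P : EuclideanSpace ℝ (Fin D) → EuclideanSpace ℝ (Fin D)
          → EuclideanSpace ℝ (Fin D))
    (hP : ∀ x w, P x w = w - (⟪x, w⟫ / r ^ 2) • x)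
    (vminus : EuclideanSpace ℝ (Fin D))
    (hvminus : vminus = v - (h / 2) • P q g) (hne : vminus ≠ 0)
    (θ : ℝ) (hθ : θ = ‖vminus‖ * h / r)
    (q' vplus v' : EuclideanSpace ℝ (Fin D))
    (hq'def : q' = Real.cos θ • q + (r / ‖vminus‖ * Real.sin θ) • vminus)
    (hvplus : vplus = (-(‖vminus‖ / r) * Real.sin θ) • q + Real.cos θ • vminus)
    (hv' : v' = vplus - (h / 2) • P q' g') :
    ‖q'‖ = r ∧ ‖vplus‖ = ‖vminus‖ ∧ ⟪q', vplus⟫ = 0 ∧ ⟪q', v'⟫ = 0 := by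
  have hr' : r ≠ 0 := ne_of_gt hr
  have hqq : ⟪q, q⟫ = r ^ 2 := by rw [real_inner_self_eq_norm_sq, hq]
  have hPq : ∀ w, ⟪q, P q w⟫ = 0 := by
    intro w
    rw [hP]
    rw [inner_sub_right, real_inner_smul_right, hqq]
    field_simp
    ring
  have hqvm : ⟪q, vminus⟫ = 0 := by
    rw [hvminus, inner_sub_right, real_inner_smul_right, hqv, hPq]
    ring
  have hnv : ‖vminus‖ ≠ 0 := norm_ne_zero_iff.mpr hne
  have hvv : ⟪vminus, vminus⟫ = ‖vminus‖ ^ 2 := real_inner_self_eq_norm_sq _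
  have hvq : ⟪vminus, q⟫ = 0 := by rw [real_inner_comm]; exact hqvm
  have hsc := Real.sin_sq_add_cos_sq θ
  have hq'sq : ⟪q', q'⟫ = r ^ 2 := by
    rw [hq'def]
    simp only [inner_add_left, inner_add_right, real_inner_smul_left,
      real_inner_smul_right, hqq, hvv, hqvm, hvq]
    field_simp
    linear_combination (r * ‖vminus‖) * hsc
  have hq'norm : ‖q'‖ = r := by
    have h1 : ‖q'‖ ^ 2 = r ^ 2 := by rw [← real_inner_self_eq_norm_sq, hq'sq]
    exact (sq_eq_sq₀ (norm_nonneg q') hr.le).mp h1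
  have hq'v : ⟪q', vplus⟫ = 0 := by
    rw [hq'def, hvplus]
    simp only [inner_add_left, inner_add_right, real_inner_smul_left,
      real_inner_smul_right, hqq, hvv, hqvm, hvq]
    field_simp
    ring
  have hvpnorm : ‖vplus‖ = ‖vminus‖ := by
    have h1 : ⟪vplus, vplus⟫ = ‖vminus‖ ^ 2 := by
      rw [hvplus]
      simp only [inner_add_left, inner_add_right, real_inner_smul_left,
        real_inner_smul_right, hqq, hvv, hqvm, hvq]
      field_simp
      linear_combination (‖vminus‖ * r) * hsc
    have h2 : ‖vplus‖ ^ 2 = ‖vminus‖ ^ 2 := by rw [← real_inner_self_eq_norm_sq, h1]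
    exact (sq_eq_sq₀ (norm_nonneg vplus) (norm_nonneg vminus)).mp h2
  refine ⟨hq'norm, hvpnorm, hq'v, ?_⟩
  have hPq' : ⟪q', P q' g'⟫ = 0 := by
    rw [hP, inner_sub_right, real_inner_smul_right, hq'sq]
    field_simp
    ring
  rw [hv', inner_sub_right, real_inner_smul_right, hq'v, hPq']
  ring
end

section
/- Let D ≥ 1 and let L be a D×D real lower triangular matrix with nonzero diagonal entries. Let P = L Lᵀ and, for 1 ≤ i ≤ D, let M_i denote the i-th leading principal minor of P (the determinant of the top-left i×i submatrix). Then (det P)^{D(D−1)/2 − 1} · ∏_{i=1}^{D} M_i^{−(D+1)/2} = ∏_{j=1}^{D} |L j j|^{(j−3)(D+1)}, where all powers are real powers of positive real numbers. -/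
open Matrix Finset Real

private lemma sum_swap_tri (n : ℕ) (f : ℕ → ℝ) :
    ∑ i ∈ range n, ∑ k ∈ range (i+1), f k
      = ∑ k ∈ range n, ((n - k : ℕ) : ℝ) * f k := by
  induction n with
  | zero => simp
  | succ n ih =>
    have h2 : ∑ k ∈ range (n+1), ((n+1-k:ℕ):ℝ)*f k
        = ∑ k ∈ range n, ((n+1-k:ℕ):ℝ)*f k + f n := by
      rw [Finset.sum_range_succ]; simp
    have h3 : ∀ k ∈ range n, ((n + 1 - k : ℕ) : ℝ) * f k = ((n - k : ℕ) : ℝ) * f k + f k := by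
      intro k hk
      have hk' := Finset.mem_range.1 hk
      have : (n + 1 - k) = (n - k) + 1 := by omega
      rw [this]; push_cast; ring
    rw [Finset.sum_range_succ, ih, h2, Finset.sum_congr rfl h3, Finset.sum_add_distrib,
      Finset.sum_range_succ]
    ring

/-- Key identity in the proof of Theorem 2.1 (part 1):
`(det P)^{D(D−1)/2 − 1} ∏_i M_i^{−(D+1)/2} = ∏_j |L j j|^{(j−3)(D+1)}`
where `P = L Lᵀ` and `M_i` is the `i`-th leading principal minor of `P`. -/
theorem marginally_uniform_density_identity
    (D : ℕ) (hD : 1 ≤ D) (L : Matrix (Fin D) (Fin D) ℝ)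
    (htri : ∀ i j : Fin D, i < j → L i j = 0)
    (hdiag : ∀ i : Fin D, L i i ≠ 0) :
    (L * Lᵀ).det ^ ((D : ℝ) * ((D : ℝ) - 1) / 2 - 1)
        * ∏ i : Fin D,
            (((L * Lᵀ).submatrix (Fin.castLE i.isLt) (Fin.castLE i.isLt)).det
              ^ (-(((D : ℝ) + 1) / 2)))
      = ∏ j : Fin D, |L j j| ^ (((j : ℕ) + 1 - 3 : ℝ) * ((D : ℝ) + 1)) := by
  -- P restricted to a leading block is the L-block times its transpose
  have hsub : ∀ i : Fin D,
      ((L * Lᵀ).submatrix (Fin.castLE i.isLt) (Fin.castLE i.isLt))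
        = (L.submatrix (Fin.castLE i.isLt) (Fin.castLE i.isLt))
          * (L.submatrix (Fin.castLE i.isLt) (Fin.castLE i.isLt))ᵀ := by
    intro i
    ext a b
    simp only [Matrix.submatrix_apply, Matrix.mul_apply, Matrix.transpose_apply]
    have hmap : ∑ m : Fin ((i : ℕ)+1),
        L (Fin.castLE i.isLt a) (Fin.castLE i.isLt m) * L (Fin.castLE i.isLt b) (Fin.castLE i.isLt m)
        = ∑ k ∈ Finset.univ.map (Fin.castLEEmb i.isLt),
            L (Fin.castLE i.isLt a) k * L (Fin.castLE i.isLt b) k := by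
      rw [Finset.sum_map]; rfl
    rw [hmap]
    refine (Finset.sum_subset (Finset.subset_univ _) ?_).symm
    intro k _ hk
    have hk' : (i : ℕ) < (k : ℕ) := by
      by_contra h
      exact hk (Finset.mem_map.2 ⟨⟨(k : ℕ), by omega⟩, Finset.mem_univ _, by
        simp [Fin.castLEEmb, Fin.ext_iff]⟩)
    have hz : L (Fin.castLE i.isLt a) k = 0 := by
      refine htri _ _ ?_
      have ha := a.isLt
      refine Fin.lt_def.2 ?_
      simp only [Fin.coe_castLE]
      omega
    simp [hz]
  -- determinant of the triangular block
  have hblockdet : ∀ i : Fin D,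
      (L.submatrix (Fin.castLE i.isLt) (Fin.castLE i.isLt)).det
        = ∏ m : Fin ((i : ℕ)+1), L (Fin.castLE i.isLt m) (Fin.castLE i.isLt m) := by
    intro i
    refine Matrix.det_of_lowerTriangular _ ?_
    intro a b hab
    have hab' : a < b := hab
    refine htri _ _ ?_
    rw [Fin.lt_def] at hab' ⊢
    simpa only [Fin.coe_castLE] using hab'
  have hdetL : L.det = ∏ j : Fin D, L j j :=
    Matrix.det_of_lowerTriangular _ (fun a b hab => htri _ _ hab)
  -- minors as products of squares
  have hminor : ∀ i : Fin D,
      ((L * Lᵀ).submatrix (Fin.castLE i.isLt) (Fin.castLE i.isLt)).det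
        = ∏ m : Fin ((i : ℕ)+1),
            (L (Fin.castLE i.isLt m) (Fin.castLE i.isLt m))^2 := by
    intro i
    rw [hsub i, Matrix.det_mul, Matrix.det_transpose, hblockdet i, Finset.prod_pow, pow_two]
  have hdetP : (L * Lᵀ).det = ∏ j : Fin D, (L j j)^2 := by
    rw [Matrix.det_mul, Matrix.det_transpose, hdetL, Finset.prod_pow, pow_two]
  -- positivity
  have hPpos : 0 < (L * Lᵀ).det := by
    rw [hdetP]; exact Finset.prod_pos fun j _ => pow_two_pos_of_ne_zero (hdiag j)
  have hMpos : ∀ i : Fin D,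
      0 < ((L * Lᵀ).submatrix (Fin.castLE i.isLt) (Fin.castLE i.isLt)).det := by
    intro i
    rw [hminor i]
    exact Finset.prod_pos fun m _ => by
      have := hdiag (Fin.castLE i.isLt m); positivity
  have hLpos : 0 < (L * Lᵀ).det ^ ((D : ℝ) * ((D : ℝ) - 1) / 2 - 1)
        * ∏ i : Fin D,
            (((L * Lᵀ).submatrix (Fin.castLE i.isLt) (Fin.castLE i.isLt)).det
              ^ (-(((D : ℝ) + 1) / 2))) := by
    refine mul_pos (Real.rpow_pos_of_pos hPpos _) (Finset.prod_pos fun i _ =>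
      Real.rpow_pos_of_pos (hMpos i) _)
  have hRpos : 0 < ∏ j : Fin D, |L j j| ^ (((j : ℕ) + 1 - 3 : ℝ) * ((D : ℝ) + 1)) :=
    Finset.prod_pos fun j _ => Real.rpow_pos_of_pos (abs_pos.2 (hdiag j)) _
  -- reduce to equality of logs
  refine Real.log_injOn_pos (Set.mem_Ioi.2 hLpos) (Set.mem_Ioi.2 hRpos) ?_
  -- the log of each diagonal entry as a function of ℕ
  set g : ℕ → ℝ := fun m => if h : m < D then Real.log |L ⟨m, h⟩ ⟨m, h⟩| else 0 with hg
  have hgval : ∀ j : Fin D, Real.log |L j j| = g (j : ℕ) := by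
    intro j
    simp only [hg, dif_pos j.isLt]
  have hlogP : Real.log ((L * Lᵀ).det) = ∑ j ∈ range D, 2 * g j := by
    rw [hdetP, Real.log_prod (fun j _ => pow_ne_zero 2 (hdiag j)),
      ← Fin.sum_univ_eq_sum_range (fun m => 2 * g m) D]
    refine Finset.sum_congr rfl fun j _ => ?_
    rw [Real.log_pow, ← Real.log_abs, hgval j]
    push_cast; ring
  have hlogM : ∀ i : Fin D,
      Real.log (((L * Lᵀ).submatrix (Fin.castLE i.isLt) (Fin.castLE i.isLt)).det)
        = ∑ k ∈ range ((i : ℕ)+1), 2 * g k := by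
    intro i
    rw [hminor i, Real.log_prod (fun m _ => pow_ne_zero 2 (hdiag _)),
      ← Fin.sum_univ_eq_sum_range (fun m => 2 * g m) ((i : ℕ)+1)]
    refine Finset.sum_congr rfl fun m _ => ?_
    rw [Real.log_pow, ← Real.log_abs, hgval (Fin.castLE i.isLt m)]
    push_cast [Fin.coe_castLE]; ring
  -- expand both sides
  rw [Real.log_mul (ne_of_gt (Real.rpow_pos_of_pos hPpos _))
      (ne_of_gt (Finset.prod_pos fun i _ => Real.rpow_pos_of_pos (hMpos i) _)),
    Real.log_rpow hPpos,
    Real.log_prod (fun i _ => ne_of_gt (Real.rpow_pos_of_pos (hMpos i) _)),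
    Real.log_prod (fun j _ => ne_of_gt (Real.rpow_pos_of_pos (abs_pos.2 (hdiag j)) _))]
  have hterm : ∀ i : Fin D,
      Real.log (((L * Lᵀ).submatrix (Fin.castLE i.isLt) (Fin.castLE i.isLt)).det
          ^ (-(((D : ℝ) + 1) / 2)))
        = (-(((D : ℝ) + 1) / 2)) * ∑ k ∈ range ((i : ℕ)+1), 2 * g k := by
    intro i
    rw [Real.log_rpow (hMpos i), hlogM i]
  rw [Finset.sum_congr rfl (fun i _ => hterm i), hlogP]
  have hrhs : ∀ j : Fin D,
      Real.log (|L j j| ^ (((j : ℕ) + 1 - 3 : ℝ) * ((D : ℝ) + 1)))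
        = (((j : ℕ) + 1 - 3 : ℝ) * ((D : ℝ) + 1)) * g (j : ℕ) := by
    intro j
    rw [Real.log_rpow (abs_pos.2 (hdiag j)), hgval j]
  rw [Finset.sum_congr rfl (fun j _ => hrhs j),
    Fin.sum_univ_eq_sum_range (fun i => (-(((D : ℝ) + 1) / 2)) * ∑ k ∈ range (i+1), 2 * g k) D,
    Fin.sum_univ_eq_sum_range (fun j => (((j : ℕ) + 1 - 3 : ℝ) * ((D : ℝ) + 1)) * g j) D,
    show ∑ i ∈ range D, -(((D:ℝ) + 1) / 2) * ∑ k ∈ range (i+1), 2 * g k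
        = -(((D:ℝ) + 1) / 2) * ∑ i ∈ range D, ∑ k ∈ range (i+1), 2 * g k
      from (Finset.mul_sum _ _ _).symm,
    sum_swap_tri D (fun k => 2 * g k), Finset.mul_sum, Finset.mul_sum,
    ← Finset.sum_add_distrib]
  refine Finset.sum_congr rfl fun j hj => ?_
  have hjD : j < D := Finset.mem_range.1 hj
  rw [Nat.cast_sub hjD.le]
  push_cast
  ring
end
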